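/- Decomposition theorem for the cd-index: Let Γ be a lower Eulerian poset, B an Eulerian poset, and φ: Γ → B a strong formal subdivision of rank 0. Then Φ_Γ = Σ_{x ∈ B} ℓ^Φ_{Γ_x} · Φ_{[x, 1̂]}, where Γ_x = φ^{-1}[0̂, x], the summand for x = 0̂ is 1 · Φ_B, and Φ_Γ is the cd-index of the near-Eulerian (or Eulerian) poset Γ. -/

import Mathlib

open scoped Classical

noncomputable section

namespace CDIndex

variable {α β : Type}

/-- The natural rank function of a graded poset: `rho x` is one less than the largest
cardinality of a chain contained in `Set.Iic x` (i.e. the length of a maximal chain of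
the interval `[0̂, x]`). -/
def rho [PartialOrder α] (x : α) : ℕ :=
  sSup {k : ℕ | ∃ s : Finset α,
    IsChain (· ≤ ·) (s : Set α) ∧ (s : Set α) ⊆ Set.Iic x ∧ s.card = k + 1}

/-- A subset `S` of a poset is graded of rank `n` if every maximal chain of `S`
has exactly `n + 1` elements (i.e. length `n`). -/
def IsGradedSetOfRank [PartialOrder α] (S : Set α) (n : ℕ) : Prop :=
  ∀ s : Finset α, (s : Set α) ⊆ S → IsChain (· ≤ ·) (s : Set α) →
    (∀ t : Finset α, (t : Set α) ⊆ S → IsChain (· ≤ ·) (t : Set α) → s ⊆ t → s = t) →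
    s.card = n + 1

/-- A poset is graded of rank `n` if every maximal chain has length `n`. -/
def IsGradedOfRank (α : Type) [PartialOrder α] (n : ℕ) : Prop :=
  IsGradedSetOfRank (Set.univ : Set α) n

/-- Every interval `[s, t]` with `s < t`, `s, t ∈ S`, has equally many elements of even
rank and of odd rank. -/
def BalancedIntervalsIn [PartialOrder α] (S : Set α) : Prop :=
  ∀ s ∈ S, ∀ t ∈ S, s < t →
    {y ∈ Set.Icc s t | Even (rho y)}.ncard = {y ∈ Set.Icc s t | Odd (rho y)}.ncard

/-- An Eulerian poset of rank `n`: a graded poset with `0̂` and `1̂` in which every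
interval of positive length has equally many elements of each parity of rank. -/
def IsEulerianOfRank (α : Type) [PartialOrder α] (n : ℕ) : Prop :=
  (∃ b : α, ∀ z, b ≤ z) ∧ (∃ t : α, ∀ z, z ≤ t) ∧
    IsGradedOfRank α n ∧ BalancedIntervalsIn (Set.univ : Set α)

/-- A lower Eulerian poset of rank `n`: a graded poset with `0̂` all of whose intervals
are Eulerian. -/
def IsLowerEulerianOfRank (α : Type) [PartialOrder α] (n : ℕ) : Prop :=
  (∃ b : α, ∀ z, b ≤ z) ∧ IsGradedOfRank α n ∧ BalancedIntervalsIn (Set.univ : Set α)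

/-- A lower order ideal `S` (of a poset) which is lower Eulerian of rank `n`. -/
def IsLowerEulerianSetOfRank [PartialOrder α] (S : Set α) (n : ℕ) : Prop :=
  IsGradedSetOfRank S n ∧ BalancedIntervalsIn S

/-- The boundary of (a lower order ideal `S` of) a graded poset of rank `n`: the lower
order ideal generated by the rank `n - 1` elements which are covered by exactly one
element. -/
def boundaryIn [PartialOrder α] (S : Set α) (n : ℕ) : Set α :=
  {y | y ∈ S ∧ ∃ x ∈ S, rho x = n - 1 ∧ {z ∈ S | x ⋖ z}.ncard = 1 ∧ y ≤ x}

/-- The boundary `∂P` of a graded poset of rank `n`. -/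
def boundary (α : Type) [PartialOrder α] (n : ℕ) : Set α :=
  boundaryIn (Set.univ : Set α) n

/-- `α` is a near-Eulerian poset of rank `n`: it is obtained from an Eulerian poset `Q`
of rank `n + 1` by removing the maximal element and one element `q` of rank `n`. -/
def IsNearEulerianOfRank (α : Type) [PartialOrder α] [Finite α] (n : ℕ) : Prop :=
  ∃ (Q : Type) (_ : PartialOrder Q) (_ : Finite Q) (q top : Q),
    IsEulerianOfRank Q (n + 1) ∧ (∀ z, z ≤ top) ∧ rho q = n ∧ q ≠ top ∧
    Nonempty (α ≃o {x : Q // x ≠ q ∧ x ≠ top})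

/-- `α` is (isomorphic to) the boundary of an Eulerian poset, where `α` has rank `n`
(so the Eulerian poset has rank `n + 1`). -/
def IsBoundaryOfEulerianOfRank (α : Type) [PartialOrder α] [Finite α] (n : ℕ) : Prop :=
  ∃ (Q : Type) (_ : PartialOrder Q) (_ : Finite Q) (top : Q),
    IsEulerianOfRank Q (n + 1) ∧ (∀ z, z ≤ top) ∧
    Nonempty (α ≃o {x : Q // x ≠ top})

/-! ### Strong formal subdivisions -/

/-- A strong formal subdivision (of rank `0`, with the natural rank functions): an
order-preserving, rank-increasing, surjective map which is strongly surjective and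
satisfies the alternating-sum condition on fibers. -/
def IsSFS {α β : Type} [PartialOrder α] [PartialOrder β] (φ : α → β) : Prop :=
  Monotone φ ∧ (∀ y, rho y ≤ rho (φ y)) ∧ Function.Surjective φ ∧
  (∀ y x, φ y ≤ x → ∃ y', y ≤ y' ∧ φ y' = x ∧ rho y' = rho x) ∧
  (∀ y x, φ y ≤ x →
    (∑ᶠ y' ∈ {y' | φ y' = x ∧ y ≤ y'}, ((-1 : ℤ) ^ rho y')) = (-1) ^ rho x)

/-! ### The flag enumerator, the `ab`-index and the `cd`-index -/

variable (K : Type) [Field K] [CharZero K]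

/-- The free noncommutative algebra `K⟨a, b⟩`. -/
abbrev FA := FreeAlgebra K (Fin 2)

/-- The letter `a`. -/
def la : FA K := FreeAlgebra.ι K 0

/-- The letter `b`. -/
def lb : FA K := FreeAlgebra.ι K 1

/-- `c = a + b`. -/
def lc : FA K := la K + lb K

/-- `d = ab + ba`. -/
def ld : FA K := la K * lb K + lb K * la K

/-- The characteristic monomial `u_S = u_1 ⋯ u_n` of a set `S` of ranks, where
`u_i = b` if `i ∈ S` and `u_i = a` otherwise. -/
def uWord (n : ℕ) (S : Set ℕ) : FA K :=
  (List.ofFn fun i : Fin n => if (i : ℕ) + 1 ∈ S then lb K else la K).prod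

/-- Chains of the subposet `S` which contain the element `b0` (intended: the minimal
element of `S`). -/
def chainsIn [PartialOrder α] (S : Set α) (b0 : α) : Set (Finset α) :=
  {C | (C : Set α) ⊆ S ∧ IsChain (· ≤ ·) (C : Set α) ∧ b0 ∈ C}

/-- The flag enumerator `Υ` of the subposet `S` with minimal element `b0`, of rank `n`;
ranks are computed relative to `b0`. -/
def upsSet [PartialOrder α] (S : Set α) (b0 : α) (n : ℕ) : FA K :=
  ∑ᶠ C ∈ chainsIn S b0, uWord K n ((fun y => rho y - rho b0) '' (C : Set α))

/-- The substitution `a ↦ a - b`, `b ↦ b` turning the flag enumerator into the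
`ab`-index. -/
def toAB : FA K →ₐ[K] FA K :=
  FreeAlgebra.lift K (fun i : Fin 2 => if i = 0 then la K - lb K else lb K)

/-- The `ab`-index `Ψ` of the subposet `S` with minimal element `b0`, of rank `n`:
`Ψ(a,b) = Υ(a-b, b)`. -/
def psiS [PartialOrder α] (S : Set α) (b0 : α) (n : ℕ) : FA K :=
  toAB K (upsSet K S b0 n)

/-- The subalgebra `K⟨c, d⟩ ⊆ K⟨a, b⟩` generated by `c = a + b` and `d = ab + ba`. -/
def cdSub : Subalgebra K (FA K) := Algebra.adjoin K {lc K, ld K}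
set_option linter.unusedSectionVars false

section RankLemmas

variable {γ : Type} [PartialOrder γ] [Finite γ]

lemma rho_set_bddAbove (x : γ) :
    BddAbove {k : ℕ | ∃ s : Finset γ,
      IsChain (· ≤ ·) (s : Set γ) ∧ (s : Set γ) ⊆ Set.Iic x ∧ s.card = k + 1} := by
  haveI := Fintype.ofFinite γ
  refine ⟨Fintype.card γ, fun k hk => ?_⟩
  obtain ⟨s, -, -, hcard⟩ := hk
  have := Finset.card_le_univ s
  omega

lemma rho_set_nonempty (x : γ) :
    ({k : ℕ | ∃ s : Finset γ,
      IsChain (· ≤ ·) (s : Set γ) ∧ (s : Set γ) ⊆ Set.Iic x ∧ s.card = k + 1}).Nonempty := by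
  refine ⟨0, {x}, ?_, ?_, by simp⟩
  · simp [IsChain, Set.pairwise_singleton]
  · simp

lemma rho_spec (x : γ) : ∃ s : Finset γ,
    IsChain (· ≤ ·) (s : Set γ) ∧ (s : Set γ) ⊆ Set.Iic x ∧ s.card = rho x + 1 :=
  Nat.sSup_mem (rho_set_nonempty x) (rho_set_bddAbove x)

lemma le_rho {x : γ} {k : ℕ} (s : Finset γ) (hc : IsChain (· ≤ ·) (s : Set γ))
    (hsub : (s : Set γ) ⊆ Set.Iic x) (hcard : s.card = k + 1) : k ≤ rho x :=
  le_csSup (rho_set_bddAbove x) ⟨s, hc, hsub, hcard⟩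

lemma rho_bot [OrderBot γ] : rho (⊥ : γ) = 0 := by
  refine Nat.le_antisymm ?_ (Nat.zero_le _)
  refine csSup_le (rho_set_nonempty ⊥) (fun k hk => ?_)
  obtain ⟨s, -, hsub, hcard⟩ := hk
  have h1 : s.card ≤ 1 := by
    refine Finset.card_le_one.2 (fun a ha b hb => ?_)
    have ha' : a ≤ ⊥ := hsub ha
    have hb' : b ≤ ⊥ := hsub hb
    rw [le_bot_iff.1 ha', le_bot_iff.1 hb']
  omega

lemma rho_lt_rho {x y : γ} (h : x < y) : rho x < rho y := by
  obtain ⟨s, hc, hsub, hcard⟩ := rho_spec x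
  have hy : y ∉ s := fun hy => lt_irrefl y (lt_of_le_of_lt (Set.mem_Iic.1 (hsub hy)) h)
  have hc' : IsChain (· ≤ ·) ((insert y s : Finset γ) : Set γ) := by
    rw [Finset.coe_insert]
    exact hc.insert (fun b hb _ => Or.inr ((hsub hb).trans h.le))
  have hsub' : ((insert y s : Finset γ) : Set γ) ⊆ Set.Iic y := by
    rw [Finset.coe_insert]
    rintro z (rfl | hz)
    · exact le_refl _
    · exact (hsub hz).trans h.le
  have hcard' : (insert y s).card = (rho x + 1) + 1 := by
    rw [Finset.card_insert_of_notMem hy, hcard]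
  exact Nat.lt_of_succ_le (le_rho _ hc' hsub' hcard')

lemma rho_mono {x y : γ} (h : x ≤ y) : rho x ≤ rho y := by
  rcases eq_or_lt_of_le h with rfl | h
  · exact le_refl _
  · exact (rho_lt_rho h).le

lemma exists_maximal_superchain (s : Finset γ) (hs : IsChain (· ≤ ·) (s : Set γ)) :
    ∃ t : Finset γ, s ⊆ t ∧ IsChain (· ≤ ·) (t : Set γ) ∧
      ∀ u : Finset γ, IsChain (· ≤ ·) (u : Set γ) → t ⊆ u → t = u := by
  haveI := Fintype.ofFinite γ
  obtain ⟨t, ht, hmax⟩ := Finset.exists_max_image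
    ((Finset.univ : Finset (Finset γ)).filter
      (fun t => s ⊆ t ∧ IsChain (· ≤ ·) (t : Set γ))) Finset.card
    ⟨s, by simp [hs]⟩
  rw [Finset.mem_filter] at ht
  refine ⟨t, ht.2.1, ht.2.2, fun u hu htu => ?_⟩
  have hu' : u ∈ (Finset.univ : Finset (Finset γ)).filter
      (fun t => s ⊆ t ∧ IsChain (· ≤ ·) (t : Set γ)) := by
    simp [ht.2.1.trans htu, hu]
  exact Finset.eq_of_subset_of_card_le htu (hmax u hu')

variable {n : ℕ}

lemma chain_card_le (hg : IsGradedOfRank γ n) {s : Finset γ}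
    (hs : IsChain (· ≤ ·) (s : Set γ)) : s.card ≤ n + 1 := by
  obtain ⟨t, hst, htc, hmax⟩ := exists_maximal_superchain s hs
  have : t.card = n + 1 := hg t (by simp) htc (fun u _ hu htu => hmax u hu htu)
  calc s.card ≤ t.card := Finset.card_le_card hst
  _ = n + 1 := this

lemma rho_le (hg : IsGradedOfRank γ n) (x : γ) : rho x ≤ n := by
  obtain ⟨s, hc, -, hcard⟩ := rho_spec x
  have := chain_card_le hg hc
  omega

lemma rho_top [OrderTop γ] (hg : IsGradedOfRank γ n) : rho (⊤ : γ) = n := by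
  refine Nat.le_antisymm (rho_le hg ⊤) ?_
  obtain ⟨t, -, htc, hmax⟩ := exists_maximal_superchain (∅ : Finset γ) (by simp)
  have hcard : t.card = n + 1 := hg t (by simp) htc (fun u _ hu htu => hmax u hu htu)
  exact le_rho t htc (fun z _ => le_top) hcard

lemma rho_lt_top [OrderTop γ] (hg : IsGradedOfRank γ n) {x : γ} (hx : x < ⊤) :
    rho x < n := by
  have := rho_lt_rho hx
  rw [rho_top hg] at this
  exact this

lemma exists_rank_above [OrderTop γ] (hg : IsGradedOfRank γ n) (hn : 1 ≤ n)
    {x : γ} (hx : x < ⊤) : ∃ x', x ≤ x' ∧ rho x' = n - 1 := by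
  haveI := Fintype.ofFinite γ
  have hpair : IsChain (· ≤ ·) (({x, ⊤} : Finset γ) : Set γ) := by
    rw [Finset.coe_insert, Finset.coe_singleton]
    have h1 : IsChain (· ≤ ·) ({(⊤ : γ)} : Set γ) := Set.pairwise_singleton _ _
    exact h1.insert (fun b hb _ => by
      rw [Set.mem_singleton_iff] at hb
      subst hb
      exact Or.inl le_top)
  obtain ⟨t, hst, htc, hmax⟩ := exists_maximal_superchain _ hpair
  have hcard : t.card = n + 1 := hg t (by simp) htc (fun u _ hu htu => hmax u hu htu)
  have hinj : Set.InjOn rho (t : Set γ) := by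
    intro a ha b hb hab
    by_contra hne
    rcases htc ha hb hne with h | h
    · exact absurd hab (Nat.ne_of_lt (rho_lt_rho (lt_of_le_of_ne h hne)))
    · exact absurd hab.symm (Nat.ne_of_lt (rho_lt_rho (lt_of_le_of_ne h (Ne.symm hne))))
  have himc : (t.image rho).card = n + 1 := by
    rw [Finset.card_image_of_injOn hinj, hcard]
  have hsub : t.image rho ⊆ Finset.range (n + 1) := by
    intro k hk
    obtain ⟨a, -, rfl⟩ := Finset.mem_image.1 hk
    exact Finset.mem_range.2 (Nat.lt_succ_of_le (rho_le hg a))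
  have heq : t.image rho = Finset.range (n + 1) :=
    Finset.eq_of_subset_of_card_le hsub (by rw [himc, Finset.card_range])
  have hmem : n - 1 ∈ t.image rho := by
    rw [heq, Finset.mem_range]; omega
  obtain ⟨x', hx't, hx'⟩ := Finset.mem_image.1 hmem
  have hxt : x ∈ t := hst (by simp)
  rcases eq_or_ne x x' with heq | hne
  · exact ⟨x', le_of_eq heq, hx'⟩
  rcases htc hxt hx't hne with h | h
  · exact ⟨x', h, hx'⟩
  · exfalso
    have h1 : rho x' < rho x := rho_lt_rho (lt_of_le_of_ne h (Ne.symm hne))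
    have h2 : rho x < n := rho_lt_top hg hx
    omega

lemma chain_exists_greatest {s : Finset γ} (hs : IsChain (· ≤ ·) (s : Set γ))
    (hne : s.Nonempty) : ∃ m ∈ s, ∀ y ∈ s, y ≤ m := by
  obtain ⟨m, hm, hmax⟩ := s.exists_maximal hne
  refine ⟨m, hm, fun y hy => ?_⟩
  rcases eq_or_ne y m with rfl | hne'
  · exact le_refl _
  rcases hs hy hm hne' with h | h
  · exact h
  · exact hmax hy h

lemma chain_exists_least {s : Finset γ} (hs : IsChain (· ≤ ·) (s : Set γ))
    (hne : s.Nonempty) : ∃ m ∈ s, ∀ y ∈ s, m ≤ y := by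
  obtain ⟨m, hm, hmin⟩ := s.exists_minimal hne
  refine ⟨m, hm, fun y hy => ?_⟩
  rcases eq_or_ne y m with rfl | hne'
  · exact le_refl _
  rcases hs hy hm hne' with h | h
  · exact hmin hy h
  · exact h

def topOf [OrderBot γ] (s : Finset γ) : γ :=
  if h : ∃ m ∈ s, ∀ y ∈ s, y ≤ m then h.choose else ⊥

lemma topOf_spec [OrderBot γ] {s : Finset γ} (h : ∃ m ∈ s, ∀ y ∈ s, y ≤ m) :
    topOf s ∈ s ∧ ∀ y ∈ s, y ≤ topOf s := by
  rw [topOf, dif_pos h]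
  exact ⟨h.choose_spec.1, h.choose_spec.2⟩

def minOf [OrderBot γ] (s : Finset γ) : γ :=
  if h : ∃ m ∈ s, ∀ y ∈ s, m ≤ y then h.choose else ⊥

lemma minOf_spec [OrderBot γ] {s : Finset γ} (h : ∃ m ∈ s, ∀ y ∈ s, m ≤ y) :
    minOf s ∈ s ∧ ∀ y ∈ s, minOf s ≤ y := by
  rw [minOf, dif_pos h]
  exact ⟨h.choose_spec.1, h.choose_spec.2⟩

lemma minOf_eq [OrderBot γ] {s : Finset γ} {m : γ} (hm : m ∈ s) (h : ∀ y ∈ s, m ≤ y) :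
    minOf s = m := by
  have hspec := minOf_spec ⟨m, hm, h⟩
  exact le_antisymm (hspec.2 m hm) (h _ hspec.1)

end RankLemmas


section Words

variable (K : Type) [Field K] [CharZero K]

lemma toAB_la : toAB K (la K) = la K - lb K := by
  rw [toAB, la, FreeAlgebra.lift_ι_apply]
  simp

lemma toAB_lb : toAB K (lb K) = lb K := by
  rw [toAB, lb, FreeAlgebra.lift_ι_apply]
  rw [if_neg (by decide)]

/-- The `(a-b,b)`-word with `b` in positions in `S` and `a - b` elsewhere. -/
def vW (m : ℕ) (S : Set ℕ) : FA K :=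
  (List.ofFn fun i : Fin m => if (i : ℕ) + 1 ∈ S then lb K else la K - lb K).prod

lemma toAB_uWord (m : ℕ) (S : Set ℕ) : toAB K (uWord K m S) = vW K m S := by
  rw [uWord, vW, map_list_prod, List.map_ofFn]
  have hfun : (⇑(toAB K) ∘ fun i : Fin m => if (i : ℕ) + 1 ∈ S then lb K else la K)
      = fun i : Fin m => if (i : ℕ) + 1 ∈ S then lb K else la K - lb K := by
    funext i
    rw [Function.comp_apply]
    by_cases h : (i : ℕ) + 1 ∈ S
    · rw [if_pos h, if_pos h, toAB_lb]
    · rw [if_neg h, if_neg h, toAB_la]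
  rw [hfun]

lemma vW_zero (S : Set ℕ) : vW K 0 S = 1 := by simp [vW]

lemma vW_add (m k : ℕ) (S : Set ℕ) (h : ∀ j ∈ S, j ≤ m) :
    vW K (m + k) S = vW K m S * (la K - lb K) ^ k := by
  rw [vW, List.ofFn_add, List.prod_append]
  have he : (fun j : Fin k =>
      if ((Fin.natAdd m j : Fin (m + k)) : ℕ) + 1 ∈ S then lb K else la K - lb K)
      = fun _ => la K - lb K := by
    funext j
    refine if_neg (fun hmem => ?_)
    have hle := h _ hmem
    have hco : ((Fin.natAdd m j : Fin (m + k)) : ℕ) = m + (j : ℕ) := rfl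
    rw [hco] at hle
    omega
  rw [he, List.ofFn_const, List.prod_replicate]
  rfl

lemma vW_ext {m m' : ℕ} (S : Set ℕ) (hmm : m ≤ m') (h : ∀ j ∈ S, j ≤ m) :
    vW K m' S = vW K m S * (la K - lb K) ^ (m' - m) := by
  obtain ⟨k, rfl⟩ := Nat.exists_eq_add_of_le hmm
  rw [vW_add K m k S h, Nat.add_sub_cancel_left]

lemma vW_all_zero (m : ℕ) {S : Set ℕ} (h : ∀ j ∈ S, j = 0) :
    vW K m S = (la K - lb K) ^ m := by
  have h2 := vW_ext K (m := 0) (m' := m) S (Nat.zero_le m) (fun j hj => (h j hj).le)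
  simpa [vW_zero] using h2

lemma vW_split (m p : ℕ) (S : Set ℕ) (hp : p ∈ S) (hp1 : 1 ≤ p) (hpm : p ≤ m)
    (hlow : ∀ j ∈ S, j < p → j = 0) :
    vW K m S = (la K - lb K) ^ (p - 1) * lb K * vW K (m - p) {t | t + p ∈ S} := by
  obtain ⟨q, rfl⟩ := Nat.exists_eq_add_of_le hpm
  rw [show p + q - p = q from by omega]
  rw [vW, List.ofFn_add, List.prod_append]
  have h2 : (List.ofFn fun j : Fin q =>
      if ((Fin.natAdd p j : Fin (p + q)) : ℕ) + 1 ∈ S then lb K else la K - lb K)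
      = List.ofFn (fun j : Fin q =>
        if (j : ℕ) + 1 ∈ {t | t + p ∈ S} then lb K else la K - lb K) := by
    congr 1
    funext j
    have hiff : ((Fin.natAdd p j : Fin (p + q)) : ℕ) + 1 ∈ S
        ↔ ((j : ℕ) + 1 ∈ {t | t + p ∈ S}) := by
      have hco : ((Fin.natAdd p j : Fin (p + q)) : ℕ) = p + (j : ℕ) := rfl
      rw [hco, Set.mem_setOf_eq, show (j : ℕ) + 1 + p = p + (j : ℕ) + 1 from by omega]
    exact if_congr hiff rfl rfl
  rw [h2]
  have h1 : (List.ofFn fun i : Fin p =>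
      if ((Fin.castAdd q i : Fin (p + q)) : ℕ) + 1 ∈ S then lb K else la K - lb K).prod
      = (la K - lb K) ^ (p - 1) * lb K := by
    obtain ⟨r, rfl⟩ := Nat.exists_eq_succ_of_ne_zero (show p ≠ 0 by omega)
    rw [List.ofFn_succ', List.prod_concat]
    have hlast : (if ((Fin.castAdd q (Fin.last r) : Fin (r + 1 + q)) : ℕ) + 1 ∈ S
        then lb K else la K - lb K) = lb K := by
      have hco : ((Fin.castAdd q (Fin.last r) : Fin (r + 1 + q)) : ℕ) = r := rfl
      rw [hco]
      exact if_pos hp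
    have hfront : (fun i : Fin r =>
        if ((Fin.castAdd q (Fin.castSucc i) : Fin (r + 1 + q)) : ℕ) + 1 ∈ S
          then lb K else la K - lb K) = fun _ => la K - lb K := by
      funext i
      refine if_neg (fun hmem => ?_)
      have hco : ((Fin.castAdd q (Fin.castSucc i) : Fin (r + 1 + q)) : ℕ) = (i : ℕ) := rfl
      rw [hco] at hmem
      have := hlow _ hmem (by omega)
      omega
    rw [hlast, hfront, List.ofFn_const, List.prod_replicate, Nat.succ_sub_one]
  rw [vW]
  exact congrArg₂ (· * ·) h1 rfl

end Words

section PsiSums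

variable (K : Type) [Field K] [CharZero K]
variable {γ : Type} [PartialOrder γ] [Finite γ]

lemma chainsIn_finite (S : Set γ) (b0 : γ) : (chainsIn S b0).Finite := by
  haveI := Fintype.ofFinite γ
  exact Set.toFinite _

lemma psiS_eq_sum (S : Set γ) (b0 : γ) (m : ℕ) :
    psiS K S b0 m = ∑ C ∈ (chainsIn_finite S b0).toFinset,
      vW K m ((fun y => rho y - rho b0) '' (C : Set γ)) := by
  rw [psiS, upsSet, finsum_mem_eq_finite_toFinset_sum _ (chainsIn_finite S b0), map_sum]
  exact Finset.sum_congr rfl fun C _ => toAB_uWord K m _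

lemma rho_image_bot [OrderBot γ] (C : Set γ) :
    (fun y => rho y - rho (⊥ : γ)) '' C = rho '' C := by
  rw [rho_bot]
  simp

end PsiSums


section Main

variable (K : Type) [Field K] [CharZero K]
variable [PartialOrder α] [Finite α] [OrderBot α]
variable [PartialOrder β] [Finite β] [OrderBot β] [OrderTop β]
variable {n : ℕ} {φ : α → β}

lemma fiber_sum (hφ : IsSFS φ) {y : α} {x : β} (h : φ y ≤ x) :
    ∑ y' ∈ (Set.toFinite {y' | φ y' = x ∧ y ≤ y'}).toFinset, ((-1 : ℤ) ^ rho y')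
      = (-1) ^ rho x := by
  have h5 := hφ.2.2.2.2 y x h
  rwa [finsum_mem_eq_finite_toFinset_sum _ (Set.toFinite _)] at h5

lemma rho_of_gt (hgΓ : IsGradedOfRank α n) {z w : α} (hz : rho z = n - 1) (hn : 1 ≤ n)
    (hw : z < w) : rho w = n := by
  have h1 := rho_lt_rho hw
  have h2 := rho_le hgΓ w
  omega

lemma covers_set_eq (hgΓ : IsGradedOfRank α n) {z : α} (hz : rho z = n - 1) (hn : 1 ≤ n) :
    {w : α | z ⋖ w} = {w : α | z < w} := by
  ext w
  simp only [Set.mem_setOf_eq]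
  constructor
  · exact fun h => h.lt
  · intro hw
    refine ⟨hw, fun v hzv hvw => ?_⟩
    have h1 := rho_lt_rho hzv
    have h2 := rho_lt_rho hvw
    have h3 := rho_le hgΓ w
    omega

lemma cover_card_eq_two (hgΓ : IsGradedOfRank α n) (hgB : IsGradedOfRank β n)
    (hφ : IsSFS φ) (hn : 1 ≤ n) {z : α} (hz : rho z = n - 1) (hzt : φ z = ⊤) :
    ({w : α | z < w}).ncard = 2 := by
  have hfib : {y' : α | φ y' = ⊤ ∧ z ≤ y'} = insert z {w : α | z < w} := by
    ext w
    simp only [Set.mem_setOf_eq, Set.mem_insert_iff]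
    constructor
    · rintro ⟨hw1, hw2⟩
      rcases eq_or_lt_of_le hw2 with h | h
      · exact Or.inl h.symm
      · exact Or.inr h
    · rintro (rfl | h)
      · exact ⟨hzt, le_refl _⟩
      · exact ⟨le_antisymm le_top (hzt ▸ hφ.1 h.le), h.le⟩
  have hsum := fiber_sum hφ (le_top : φ z ≤ ⊤)
  have hT : (Set.toFinite {y' | φ y' = ⊤ ∧ z ≤ y'}).toFinset
      = insert z (Set.toFinite {w : α | z < w}).toFinset := by
    ext w
    simp only [Set.Finite.mem_toFinset, Finset.mem_insert, hfib, Set.mem_insert_iff]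
  rw [hT, Finset.sum_insert (by simp only [Set.Finite.mem_toFinset, Set.mem_setOf_eq]; exact lt_irrefl z)] at hsum
  have hconst : ∀ w ∈ (Set.toFinite {w : α | z < w}).toFinset,
      ((-1 : ℤ)) ^ rho w = (-1) ^ n := by
    intro w hw
    rw [Set.Finite.mem_toFinset] at hw
    rw [rho_of_gt hgΓ hz hn hw]
  rw [Finset.sum_congr rfl hconst, Finset.sum_const, nsmul_eq_mul, hz,
    rho_top hgB] at hsum
  have hcard : ({w : α | z < w}).ncard
      = ((Set.toFinite {w : α | z < w}).toFinset).card :=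
    Set.ncard_eq_toFinset_card _ _
  rw [hcard]
  set c := ((Set.toFinite {w : α | z < w}).toFinset).card with hc
  rcases Nat.even_or_odd (n - 1) with hpar | hpar
  · have ht : ((-1 : ℤ)) ^ (n - 1) = 1 := hpar.neg_one_pow
    have hs : ((-1 : ℤ)) ^ n = -1 := by
      rw [show n = (n - 1) + 1 from by omega, pow_succ, ht]; ring
    rw [ht, hs] at hsum
    omega
  · have ht : ((-1 : ℤ)) ^ (n - 1) = -1 := hpar.neg_one_pow
    have hs : ((-1 : ℤ)) ^ n = 1 := by
      rw [show n = (n - 1) + 1 from by omega, pow_succ, ht]; ring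
    rw [ht, hs] at hsum
    omega

lemma cover_card_eq_one (hgΓ : IsGradedOfRank α n) (hgB : IsGradedOfRank β n)
    (hφ : IsSFS φ) (hn : 1 ≤ n) {z : α} (hz : rho z = n - 1) (hzt : φ z ≠ ⊤) :
    ({w : α | z < w}).ncard = 1 := by
  have hphiw : ∀ w : α, z < w → φ w = ⊤ := by
    intro w hw
    by_contra hne
    have h1 : φ w < ⊤ := lt_top_iff_ne_top.2 hne
    have h2 := rho_lt_top hgB h1
    have h3 := hφ.2.1 w
    have h4 := rho_of_gt hgΓ hz hn hw
    omega
  have hfib : {y' : α | φ y' = ⊤ ∧ z ≤ y'} = {w : α | z < w} := by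
    ext w
    simp only [Set.mem_setOf_eq]
    constructor
    · rintro ⟨hw1, hw2⟩
      rcases eq_or_lt_of_le hw2 with h | h
      · exact absurd (h ▸ hw1) hzt
      · exact h
    · intro h
      exact ⟨hphiw w h, h.le⟩
  have hsum := fiber_sum hφ (le_top : φ z ≤ ⊤)
  have hT : (Set.toFinite {y' | φ y' = ⊤ ∧ z ≤ y'}).toFinset
      = (Set.toFinite {w : α | z < w}).toFinset := by
    ext w
    simp only [Set.Finite.mem_toFinset, hfib]
  rw [hT] at hsum
  have hconst : ∀ w ∈ (Set.toFinite {w : α | z < w}).toFinset,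
      ((-1 : ℤ)) ^ rho w = (-1) ^ n := by
    intro w hw
    rw [Set.Finite.mem_toFinset] at hw
    rw [rho_of_gt hgΓ hz hn hw]
  rw [Finset.sum_congr rfl hconst, Finset.sum_const, nsmul_eq_mul, rho_top hgB] at hsum
  have hcard : ({w : α | z < w}).ncard
      = ((Set.toFinite {w : α | z < w}).toFinset).card :=
    Set.ncard_eq_toFinset_card _ _
  rw [hcard]
  set c := ((Set.toFinite {w : α | z < w}).toFinset).card with hc
  rcases Nat.even_or_odd n with hpar | hpar
  · have hs : ((-1 : ℤ)) ^ n = 1 := hpar.neg_one_pow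
    rw [hs] at hsum; omega
  · have hs : ((-1 : ℤ)) ^ n = -1 := hpar.neg_one_pow
    rw [hs] at hsum; omega

lemma boundary_eq (hgΓ : IsGradedOfRank α n) (hgB : IsGradedOfRank β n) (hφ : IsSFS φ) :
    boundary α n = φ ⁻¹' (Set.Iio (⊤ : β)) := by
  rcases Nat.eq_zero_or_pos n with rfl | hn
  · have hD : φ ⁻¹' (Set.Iio (⊤ : β)) = ∅ := by
      ext y
      simp only [Set.mem_preimage, Set.mem_Iio, Set.mem_empty_iff_false, iff_false]
      intro hlt
      have := rho_lt_top hgB hlt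
      omega
    rw [hD]
    ext y
    simp only [boundary, boundaryIn, Set.mem_univ, true_and, Set.mem_setOf_eq,
      Set.mem_empty_iff_false, iff_false]
    rintro ⟨x, hx0, hcnt, -⟩
    have hemp : {w : α | x ⋖ w} = ∅ := by
      ext w
      simp only [Set.mem_setOf_eq, Set.mem_empty_iff_false, iff_false]
      intro hw
      have h1 := rho_lt_rho hw.lt
      have h2 := rho_le hgΓ w
      omega
    rw [hemp, Set.ncard_empty] at hcnt
    omega
  · have hn' : 1 ≤ n := hn
    ext y
    simp only [boundary, boundaryIn, Set.mem_univ, true_and, Set.mem_setOf_eq,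
      Set.mem_preimage, Set.mem_Iio]
    constructor
    · rintro ⟨z, hz, hcnt, hyz⟩
      rw [covers_set_eq hgΓ hz hn'] at hcnt
      have hzt : φ z ≠ ⊤ := by
        intro hzt
        rw [cover_card_eq_two hgΓ hgB hφ hn' hz hzt] at hcnt
        omega
      exact lt_of_le_of_lt (hφ.1 hyz) (lt_top_iff_ne_top.2 hzt)
    · intro hy
      obtain ⟨x', hx'ge, hx'⟩ := exists_rank_above hgB hn' hy
      obtain ⟨z, hyz, hφz, hzrho⟩ := hφ.2.2.2.1 y x' hx'ge
      rw [hx'] at hzrho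
      have hzt : φ z ≠ ⊤ := by
        rw [hφz]
        intro h
        rw [h, rho_top hgB] at hx'
        omega
      refine ⟨z, hzrho, ?_, hyz⟩
      rw [covers_set_eq hgΓ hzrho hn', cover_card_eq_one hgΓ hgB hφ hn' hzrho hzt]

lemma mem_chainsF {γ : Type} [PartialOrder γ] [Finite γ] {S : Set γ} {b0 : γ}
    {C : Finset γ} :
    C ∈ (chainsIn_finite S b0).toFinset
      ↔ ((C : Set γ) ⊆ S ∧ IsChain (· ≤ ·) (C : Set γ) ∧ b0 ∈ C) := by
  rw [Set.Finite.mem_toFinset]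
  rfl

lemma U_rec (hgB : IsGradedOfRank β n) {z : β} (hz : z < ⊤) :
    psiS K (Set.Ico z ⊤) z (n - rho z - 1)
      = (la K - lb K) ^ (n - rho z - 1)
        + ∑ x ∈ (Set.toFinite {x : β | z < x ∧ x < ⊤}).toFinset,
            (la K - lb K) ^ (rho x - rho z - 1) * lb K
              * psiS K (Set.Ico x ⊤) x (n - rho x - 1) := by
  classical
  rw [psiS_eq_sum]
  have hsing : ({z} : Finset β) ∈ (chainsIn_finite (Set.Ico z ⊤) z).toFinset := by
    rw [mem_chainsF]
    refine ⟨?_, ?_, Finset.mem_singleton_self z⟩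
    · rw [Finset.coe_singleton, Set.singleton_subset_iff]
      exact ⟨le_refl z, hz⟩
    · rw [Finset.coe_singleton]
      exact Set.pairwise_singleton _ _
  rw [← Finset.add_sum_erase _ _ hsing]
  congr 1
  · rw [Finset.coe_singleton, Set.image_singleton, Nat.sub_self]
    exact vW_all_zero K _ (fun j hj => by simpa using hj)
  · -- rewrite RHS into a sigma sum
    have hrhs : ∀ x ∈ (Set.toFinite {x : β | z < x ∧ x < ⊤}).toFinset,
        (la K - lb K) ^ (rho x - rho z - 1) * lb K
            * psiS K (Set.Ico x ⊤) x (n - rho x - 1)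
          = ∑ E' ∈ (chainsIn_finite (Set.Ico x ⊤) x).toFinset,
              (la K - lb K) ^ (rho x - rho z - 1) * lb K
                * vW K (n - rho x - 1) ((fun y => rho y - rho x) '' (E' : Set β)) := by
      intro x _
      rw [psiS_eq_sum, Finset.mul_sum]
    rw [Finset.sum_congr rfl hrhs, Finset.sum_sigma']
    refine Finset.sum_bij'
      (fun E _ => (⟨minOf (E.erase z), E.erase z⟩ :
        Σ _ : β, Finset β))
      (fun p _ => insert z p.2) ?_ ?_ ?_ ?_ ?_
    · -- i maps into sigma
      intro E hE
      obtain ⟨hEne, hEF⟩ := Finset.mem_erase.1 hE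
      obtain ⟨hsub, hch, hzE⟩ := mem_chainsF.1 hEF
      have hne : (E.erase z).Nonempty := by
        obtain ⟨w, hwE, hwz⟩ : ∃ w ∈ E, w ≠ z := by
          by_contra h
          push_neg at h
          exact hEne (Finset.eq_singleton_iff_unique_mem.2 ⟨hzE, h⟩)
        exact ⟨w, Finset.mem_erase.2 ⟨hwz, hwE⟩⟩
      have hchE' : IsChain (· ≤ ·) ((E.erase z : Finset β) : Set β) :=
        hch.mono (Finset.coe_subset.2 (Finset.erase_subset z E))
      obtain ⟨hxmem, hxle⟩ := minOf_spec (chain_exists_least hchE' hne)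
      have hxz : minOf (E.erase z) ≠ z := (Finset.mem_erase.1 hxmem).1
      have hxE : minOf (E.erase z) ∈ E := Finset.mem_of_mem_erase hxmem
      have hxIco := hsub (Finset.mem_coe.2 hxE)
      rw [Finset.mem_sigma]
      constructor
      · rw [Set.Finite.mem_toFinset]
        exact ⟨lt_of_le_of_ne hxIco.1 (Ne.symm hxz), hxIco.2⟩
      · rw [mem_chainsF]
        refine ⟨?_, hchE', hxmem⟩
        intro e he
        have heE : e ∈ E := Finset.mem_of_mem_erase (Finset.mem_coe.1 he)
        exact ⟨hxle e (Finset.mem_coe.1 he), (hsub (Finset.mem_coe.2 heE)).2⟩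
    · -- j maps back
      rintro ⟨x, E'⟩ hp
      rw [Finset.mem_sigma] at hp
      obtain ⟨hxX, hE'⟩ := hp
      rw [Set.Finite.mem_toFinset] at hxX
      obtain ⟨hzx, hxt⟩ := hxX
      obtain ⟨hsub', hch', hxE'⟩ := mem_chainsF.1 hE'
      dsimp only at hzx hxt hsub' hch' hxE'
      have hle : ∀ e ∈ (E' : Set β), z ≤ e := fun e he => hzx.le.trans (hsub' he).1
      rw [Finset.mem_erase]
      constructor
      · intro h
        have h' : insert z E' = {z} := h
        have hxmem : x ∈ insert z E' := Finset.mem_insert_of_mem hxE'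
        rw [h', Finset.mem_singleton] at hxmem
        exact (ne_of_gt hzx) hxmem
      · rw [mem_chainsF]
        refine ⟨?_, ?_, Finset.mem_insert_self z E'⟩
        · rw [Finset.coe_insert]
          rintro w (rfl | hw)
          · exact ⟨le_refl _, hz⟩
          · exact ⟨hle w hw, (hsub' hw).2⟩
        · rw [Finset.coe_insert]
          exact hch'.insert (fun b hb _ => Or.inl (hle b hb))
    · -- left inverse
      intro E hE
      obtain ⟨-, hEF⟩ := Finset.mem_erase.1 hE
      obtain ⟨-, -, hzE⟩ := mem_chainsF.1 hEF
      exact Finset.insert_erase hzE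
    · -- right inverse
      rintro ⟨x, E'⟩ hp
      rw [Finset.mem_sigma] at hp
      obtain ⟨hxX, hE'⟩ := hp
      rw [Set.Finite.mem_toFinset] at hxX
      obtain ⟨hzx, hxt⟩ := hxX
      obtain ⟨hsub', hch', hxE'⟩ := mem_chainsF.1 hE'
      dsimp only at hzx hxt hsub' hch' hxE'
      have hznotin : z ∉ E' := by
        intro h
        exact hzx.not_ge (hsub' (Finset.mem_coe.2 h)).1
      have h1 : (insert z E').erase z = E' := Finset.erase_insert hznotin
      have h2 : minOf ((insert z E').erase z) = x := by
        rw [h1]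
        exact minOf_eq hxE' (fun y hy => (hsub' (Finset.mem_coe.2 hy)).1)
      show (⟨minOf ((insert z E').erase z), (insert z E').erase z⟩ : Σ _ : β, Finset β)
        = ⟨x, E'⟩
      rw [h2, h1]
    · -- values agree
      intro E hE
      obtain ⟨hEne, hEF⟩ := Finset.mem_erase.1 hE
      obtain ⟨hsub, hch, hzE⟩ := mem_chainsF.1 hEF
      have hne : (E.erase z).Nonempty := by
        obtain ⟨w, hwE, hwz⟩ : ∃ w ∈ E, w ≠ z := by
          by_contra h
          push_neg at h
          exact hEne (Finset.eq_singleton_iff_unique_mem.2 ⟨hzE, h⟩)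
        exact ⟨w, Finset.mem_erase.2 ⟨hwz, hwE⟩⟩
      have hchE' : IsChain (· ≤ ·) ((E.erase z : Finset β) : Set β) :=
        hch.mono (Finset.coe_subset.2 (Finset.erase_subset z E))
      obtain ⟨hxmem, hxle⟩ := minOf_spec (chain_exists_least hchE' hne)
      set x := minOf (E.erase z) with hxdef
      have hxz : x ≠ z := (Finset.mem_erase.1 hxmem).1
      have hxE : x ∈ E := Finset.mem_of_mem_erase hxmem
      have hxIco := hsub (Finset.mem_coe.2 hxE)
      have hzx : z < x := lt_of_le_of_ne hxIco.1 (Ne.symm hxz)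
      have hrr : rho z < rho x := rho_lt_rho hzx
      have hrn : rho x < n := rho_lt_top hgB hxIco.2
      have hsplit := vW_split K (n - rho z - 1) (rho x - rho z)
        ((fun y => rho y - rho z) '' (E : Set β))
        ⟨x, Finset.mem_coe.2 hxE, rfl⟩ (by omega) (by omega) ?_
      · rw [hsplit, show (n - rho z - 1) - (rho x - rho z) = n - rho x - 1 from by omega]
        have hseteq : {t | t + (rho x - rho z) ∈ (fun y => rho y - rho z) '' (E : Set β)}
            = (fun y => rho y - rho x) '' ((E.erase z : Finset β) : Set β) := by
          ext t
          simp only [Set.mem_setOf_eq, Set.mem_image]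
          constructor
          · rintro ⟨e, heE, heq⟩
            have hez : e ≠ z := by
              intro h
              rw [h, Nat.sub_self] at heq
              omega
            have heE' : e ∈ E.erase z := Finset.mem_erase.2 ⟨hez, Finset.mem_coe.1 heE⟩
            have hxe : rho x ≤ rho e := rho_mono (hxle e heE')
            exact ⟨e, Finset.mem_coe.2 heE', by omega⟩
          · rintro ⟨e, heE', rfl⟩
            have heE'' : e ∈ E.erase z := Finset.mem_coe.1 heE'
            have hxe : rho x ≤ rho e := rho_mono (hxle e heE'')
            exact ⟨e, Finset.mem_coe.2 (Finset.mem_of_mem_erase heE''), by omega⟩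
        rw [hseteq]
      · rintro j hjm hj
        obtain ⟨e, heE, heq⟩ := hjm
        simp only at heq
        subst heq
        rcases eq_or_ne e z with rfl | hez
        · exact Nat.sub_self _
        · have heE' : e ∈ E.erase z := Finset.mem_erase.2 ⟨hez, Finset.mem_coe.1 heE⟩
          have hxe : rho x ≤ rho e := rho_mono (hxle e heE')
          omega


lemma claimB (hgB : IsGradedOfRank β n) {z : β} (hz : z < ⊤) :
    ∑ x ∈ (Set.toFinite {x : β | z ≤ x ∧ x < ⊤}).toFinset,
      ((la K - lb K) ^ (rho x - rho z)
          - (if z < x then (la K - lb K) ^ (rho x - rho z - 1) * la K else 0))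
        * psiS K (Set.Ico x ⊤) x (n - rho x - 1)
      = (la K - lb K) ^ (n - rho z - 1) := by
  classical
  have hins : (Set.toFinite {x : β | z ≤ x ∧ x < ⊤}).toFinset
      = insert z (Set.toFinite {x : β | z < x ∧ x < ⊤}).toFinset := by
    ext x
    simp only [Set.Finite.mem_toFinset, Set.mem_setOf_eq, Finset.mem_insert]
    constructor
    · rintro ⟨h1, h2⟩
      rcases eq_or_lt_of_le h1 with h | h
      · exact Or.inl h.symm
      · exact Or.inr ⟨h, h2⟩
    · rintro (rfl | ⟨h1, h2⟩)
      · exact ⟨le_refl _, hz⟩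
      · exact ⟨h1.le, h2⟩
  rw [hins, Finset.sum_insert (by
    rw [Set.Finite.mem_toFinset]
    exact fun h => lt_irrefl z h.1)]
  have hzterm : ((la K - lb K) ^ (rho z - rho z)
      - (if z < z then (la K - lb K) ^ (rho z - rho z - 1) * la K else 0))
      * psiS K (Set.Ico z ⊤) z (n - rho z - 1)
      = psiS K (Set.Ico z ⊤) z (n - rho z - 1) := by
    rw [if_neg (lt_irrefl z), Nat.sub_self, pow_zero, sub_zero, one_mul]
  rw [hzterm, U_rec K hgB hz]
  have hterm : ∀ x ∈ (Set.toFinite {x : β | z < x ∧ x < ⊤}).toFinset,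
      ((la K - lb K) ^ (rho x - rho z)
          - (if z < x then (la K - lb K) ^ (rho x - rho z - 1) * la K else 0))
        * psiS K (Set.Ico x ⊤) x (n - rho x - 1)
      = -((la K - lb K) ^ (rho x - rho z - 1) * lb K
            * psiS K (Set.Ico x ⊤) x (n - rho x - 1)) := by
    intro x hx
    rw [Set.Finite.mem_toFinset] at hx
    obtain ⟨hzx, -⟩ := hx
    have hrr : rho z < rho x := rho_lt_rho hzx
    set d := rho x - rho z - 1 with hd
    rw [if_pos hzx, show rho x - rho z = d + 1 from by omega, pow_succ, ← mul_sub,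
      show la K - lb K - la K = -(lb K) from by abel, mul_neg, neg_mul, mul_assoc]
  rw [Finset.sum_congr rfl hterm, Finset.sum_neg_distrib, add_neg_cancel_right]


lemma core (hgΓ : IsGradedOfRank α n) (hgB : IsGradedOfRank β n) (hφ : IsSFS φ) :
    psiS K (φ ⁻¹' Set.Iio (⊤ : β)) ⊥ (n - 1)
      = ∑ x ∈ (Set.toFinite {x : β | x < ⊤}).toFinset,
          (psiS K (φ ⁻¹' Set.Iic x) ⊥ (rho x)
              - psiS K (φ ⁻¹' Set.Iio x) ⊥ (rho x - 1) * la K)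
            * psiS K (Set.Ico x ⊤) x (n - rho x - 1) := by
  classical
  -- facts about chains in D
  have hCfact : ∀ C ∈ (chainsIn_finite (φ ⁻¹' Set.Iio (⊤ : β)) ⊥).toFinset,
      topOf C ∈ C ∧ ∀ y ∈ C, y ≤ topOf C := by
    intro C hC
    obtain ⟨hsub, hch, hbC⟩ := mem_chainsF.1 hC
    exact topOf_spec (chain_exists_greatest hch ⟨⊥, hbC⟩)
  -- identification of the chain finsets
  have hIic : ∀ x : β, x < ⊤ → (chainsIn_finite (φ ⁻¹' Set.Iic x) ⊥).toFinset
      = (chainsIn_finite (φ ⁻¹' Set.Iio (⊤ : β)) ⊥).toFinset.filter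
          (fun C => φ (topOf C) ≤ x) := by
    intro x hx
    ext C
    rw [mem_chainsF, Finset.mem_filter, mem_chainsF]
    constructor
    · rintro ⟨hsub, hch, hbC⟩
      have htop := topOf_spec (chain_exists_greatest hch ⟨⊥, hbC⟩)
      have htx : φ (topOf C) ≤ x :=
        Set.mem_Iic.1 (Set.mem_preimage.1 (hsub (Finset.mem_coe.2 htop.1)))
      refine ⟨⟨fun c hc => ?_, hch, hbC⟩, htx⟩
      exact Set.mem_preimage.2 (Set.mem_Iio.2
        (lt_of_le_of_lt (Set.mem_Iic.1 (Set.mem_preimage.1 (hsub hc))) hx))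
    · rintro ⟨⟨hsub, hch, hbC⟩, htx⟩
      have htop := topOf_spec (chain_exists_greatest hch ⟨⊥, hbC⟩)
      refine ⟨fun c hc => ?_, hch, hbC⟩
      exact Set.mem_preimage.2 (Set.mem_Iic.2
        (le_trans (hφ.1 (htop.2 c (Finset.mem_coe.1 hc))) htx))
  have hIio : ∀ x : β, x < ⊤ → (chainsIn_finite (φ ⁻¹' Set.Iio x) ⊥).toFinset
      = (chainsIn_finite (φ ⁻¹' Set.Iio (⊤ : β)) ⊥).toFinset.filter
          (fun C => φ (topOf C) < x) := by
    intro x hx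
    ext C
    rw [mem_chainsF, Finset.mem_filter, mem_chainsF]
    constructor
    · rintro ⟨hsub, hch, hbC⟩
      have htop := topOf_spec (chain_exists_greatest hch ⟨⊥, hbC⟩)
      have htx : φ (topOf C) < x :=
        Set.mem_Iio.1 (Set.mem_preimage.1 (hsub (Finset.mem_coe.2 htop.1)))
      refine ⟨⟨fun c hc => ?_, hch, hbC⟩, htx⟩
      exact Set.mem_preimage.2 (Set.mem_Iio.2
        (lt_trans (Set.mem_Iio.1 (Set.mem_preimage.1 (hsub hc))) hx))
    · rintro ⟨⟨hsub, hch, hbC⟩, htx⟩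
      have htop := topOf_spec (chain_exists_greatest hch ⟨⊥, hbC⟩)
      refine ⟨fun c hc => ?_, hch, hbC⟩
      exact Set.mem_preimage.2 (Set.mem_Iio.2
        (lt_of_le_of_lt (hφ.1 (htop.2 c (Finset.mem_coe.1 hc))) htx))
  have hpsiIic : ∀ x : β, x < ⊤ → psiS K (φ ⁻¹' Set.Iic x) ⊥ (rho x)
      = ∑ C ∈ (chainsIn_finite (φ ⁻¹' Set.Iio (⊤ : β)) ⊥).toFinset,
          if φ (topOf C) ≤ x then vW K (rho x) (rho '' (C : Set α)) else 0 := by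
    intro x hx
    rw [psiS_eq_sum, hIic x hx, Finset.sum_filter]
    exact Finset.sum_congr rfl (fun C _ => by rw [rho_image_bot])
  have hpsiIio : ∀ x : β, x < ⊤ → psiS K (φ ⁻¹' Set.Iio x) ⊥ (rho x - 1)
      = ∑ C ∈ (chainsIn_finite (φ ⁻¹' Set.Iio (⊤ : β)) ⊥).toFinset,
          if φ (topOf C) < x then vW K (rho x - 1) (rho '' (C : Set α)) else 0 := by
    intro x hx
    rw [psiS_eq_sum, hIio x hx, Finset.sum_filter]
    exact Finset.sum_congr rfl (fun C _ => by rw [rho_image_bot])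
  -- step 1 : expand each summand on the RHS as a sum over chains
  have hstep1 : ∀ x ∈ (Set.toFinite {x : β | x < ⊤}).toFinset,
      (psiS K (φ ⁻¹' Set.Iic x) ⊥ (rho x)
          - psiS K (φ ⁻¹' Set.Iio x) ⊥ (rho x - 1) * la K)
        * psiS K (Set.Ico x ⊤) x (n - rho x - 1)
      = ∑ C ∈ (chainsIn_finite (φ ⁻¹' Set.Iio (⊤ : β)) ⊥).toFinset,
          ((if φ (topOf C) ≤ x then vW K (rho x) (rho '' (C : Set α)) else 0)
              - (if φ (topOf C) < x then vW K (rho x - 1) (rho '' (C : Set α)) else 0)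
                  * la K)
            * psiS K (Set.Ico x ⊤) x (n - rho x - 1) := by
    intro x hxX
    rw [Set.Finite.mem_toFinset] at hxX
    rw [hpsiIic x hxX, hpsiIio x hxX, Finset.sum_mul, ← Finset.sum_sub_distrib,
      Finset.sum_mul]
  rw [Finset.sum_congr rfl hstep1, Finset.sum_comm, psiS_eq_sum]
  -- now handle each chain separately
  refine Finset.sum_congr rfl (fun C hC => ?_)
  rw [rho_image_bot]
  obtain ⟨htopC, hletop⟩ := hCfact C hC
  obtain ⟨hsubC, hchC, hbC⟩ := mem_chainsF.1 hC
  have hzt : φ (topOf C) < ⊤ :=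
    Set.mem_Iio.1 (Set.mem_preimage.1 (hsubC (Finset.mem_coe.2 htopC)))
  have hranks : ∀ j ∈ rho '' (C : Set α), j ≤ rho (φ (topOf C)) := by
    rintro j ⟨c, hc, rfl⟩
    exact le_trans (rho_mono (hletop c (Finset.mem_coe.1 hc)))
      (le_trans (hφ.2.1 (topOf C)) (rho_mono (le_refl _)))
  -- rewrite each x-term
  have hterm : ∀ x ∈ (Set.toFinite {x : β | x < ⊤}).toFinset,
      ((if φ (topOf C) ≤ x then vW K (rho x) (rho '' (C : Set α)) else 0)
          - (if φ (topOf C) < x then vW K (rho x - 1) (rho '' (C : Set α)) else 0)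
              * la K)
        * psiS K (Set.Ico x ⊤) x (n - rho x - 1)
      = if φ (topOf C) ≤ x then
          vW K (rho (φ (topOf C))) (rho '' (C : Set α))
            * (((la K - lb K) ^ (rho x - rho (φ (topOf C)))
                - (if φ (topOf C) < x then
                    (la K - lb K) ^ (rho x - rho (φ (topOf C)) - 1) * la K else 0))
              * psiS K (Set.Ico x ⊤) x (n - rho x - 1))
        else 0 := by
    intro x hxX
    by_cases h1 : φ (topOf C) ≤ x
    · rw [if_pos h1, if_pos h1]
      have hpz : rho (φ (topOf C)) ≤ rho x := rho_mono h1
      have hvw1 : vW K (rho x) (rho '' (C : Set α))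
          = vW K (rho (φ (topOf C))) (rho '' (C : Set α))
            * (la K - lb K) ^ (rho x - rho (φ (topOf C))) :=
        vW_ext K _ hpz hranks
      by_cases h2 : φ (topOf C) < x
      · have hpz2 : rho (φ (topOf C)) < rho x := rho_lt_rho h2
        have hvw2 : vW K (rho x - 1) (rho '' (C : Set α))
            = vW K (rho (φ (topOf C))) (rho '' (C : Set α))
              * (la K - lb K) ^ (rho x - rho (φ (topOf C)) - 1) := by
          rw [vW_ext K (m := rho (φ (topOf C))) (m' := rho x - 1) _ (by omega) hranks,
            show rho x - 1 - rho (φ (topOf C)) = rho x - rho (φ (topOf C)) - 1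
              from by omega]
        rw [if_pos h2, if_pos h2, hvw1, hvw2, mul_assoc
            (vW K (rho (φ (topOf C))) (rho '' (C : Set α)))
            ((la K - lb K) ^ (rho x - rho (φ (topOf C)) - 1)) (la K),
          ← mul_sub, mul_assoc]
      · rw [if_neg h2, if_neg h2, hvw1, zero_mul, sub_zero, sub_zero, mul_assoc]
    · rw [if_neg h1, if_neg h1, if_neg (fun h2 => h1 h2.le), zero_mul, sub_zero,
        zero_mul]
  have hflt : (Set.toFinite {x : β | x < ⊤}).toFinset.filter
      (fun x => φ (topOf C) ≤ x)
      = (Set.toFinite {x : β | φ (topOf C) ≤ x ∧ x < ⊤}).toFinset := by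
    ext x
    simp only [Finset.mem_filter, Set.Finite.mem_toFinset, Set.mem_setOf_eq]
    tauto
  have hfin : vW K (rho (φ (topOf C))) (rho '' (C : Set α))
      * (la K - lb K) ^ (n - rho (φ (topOf C)) - 1)
      = vW K (n - 1) (rho '' (C : Set α)) := by
    have hzn : rho (φ (topOf C)) < n := rho_lt_top hgB hzt
    rw [vW_ext K (m := rho (φ (topOf C))) (m' := n - 1) _ (by omega) hranks,
      show n - 1 - rho (φ (topOf C)) = n - rho (φ (topOf C)) - 1 from by omega]
  rw [Finset.sum_congr rfl hterm, ← Finset.sum_filter, hflt, ← Finset.mul_sum,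
    claimB K hgB hzt, hfin]


end Main

/-- Decomposition theorem for the `cd`-index.  Let `Γ` be lower
Eulerian, `B` Eulerian, both of rank `n`, and `φ : Γ → B` a strong formal subdivision of
rank `0`.  Then `Φ_Γ = ∑_{x ∈ B} ℓ^Φ_{Γ_x} · Φ_{[x, 1̂]}`.  Here `Γ_x = φ⁻¹[0̂, x]`,
the cd-index of the near-Eulerian poset `Γ` is `Φ_Γ = ℓ^Φ_Γ + Φ_{∂Γ}` with
`ℓ^Φ_Γ = Ψ_Γ - Ψ_{∂Γ}·a` (all viewed inside `K⟨a,b⟩`), the local cd-index of `Γ_x` is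
`ℓ^Φ_{Γ_x} = Ψ_{Γ_x} - Ψ_{∂Γ_x}·a` with `∂Γ_x = φ⁻¹[0̂, x)`, and `Φ_{[x,1̂]}` is the
`cd`-index `Ψ_{[x,1̂)}` of the Eulerian interval `[x,1̂]` (equal to `1` for `x = 1̂`,
so that the summand for `x = 0̂` is `1 · Φ_B`). -/
theorem decomposition_cdIndex
    (K : Type) [Field K] [CharZero K]
    (α β : Type) [PartialOrder α] [Finite α] [OrderBot α]
    [PartialOrder β] [Finite β] [OrderBot β] [OrderTop β] (n : ℕ)
    (hΓ : IsLowerEulerianOfRank α n) (hB : IsEulerianOfRank β n)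
    (φ : α → β) (hφ : IsSFS φ) :
    psiS K (Set.univ : Set α) ⊥ n
        - psiS K (boundary α n) ⊥ (n - 1) * la K
        + psiS K (boundary α n) ⊥ (n - 1)
      = ∑ᶠ x : β,
          (psiS K (φ ⁻¹' Set.Iic x) ⊥ (rho x)
              - psiS K (φ ⁻¹' Set.Iio x) ⊥ (rho x - 1) * la K)
            * (if x = ⊤ then 1 else psiS K (Set.Ico x ⊤) x (n - rho x - 1)) := by
  classical
  haveI := Fintype.ofFinite β
  obtain ⟨-, hgΓ, -⟩ := hΓ
  obtain ⟨-, -, hgB, -⟩ := hB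
  rw [boundary_eq hgΓ hgB hφ, finsum_eq_sum_of_fintype,
    ← Finset.add_sum_erase _ _ (Finset.mem_univ (⊤ : β))]
  have htopterm : (psiS K (φ ⁻¹' Set.Iic (⊤ : β)) ⊥ (rho (⊤ : β))
      - psiS K (φ ⁻¹' Set.Iio (⊤ : β)) ⊥ (rho (⊤ : β) - 1) * la K)
      * (if (⊤ : β) = ⊤ then 1
          else psiS K (Set.Ico (⊤ : β) ⊤) ⊤ (n - rho (⊤ : β) - 1))
      = psiS K (Set.univ : Set α) ⊥ n
        - psiS K (φ ⁻¹' Set.Iio (⊤ : β)) ⊥ (n - 1) * la K := by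
    rw [if_pos rfl, mul_one, Set.Iic_top, Set.preimage_univ, rho_top hgB]
  rw [htopterm]
  have hsum2 : ∑ x ∈ Finset.univ.erase (⊤ : β),
      (psiS K (φ ⁻¹' Set.Iic x) ⊥ (rho x)
          - psiS K (φ ⁻¹' Set.Iio x) ⊥ (rho x - 1) * la K)
        * (if x = ⊤ then 1 else psiS K (Set.Ico x ⊤) x (n - rho x - 1))
      = ∑ x ∈ (Set.toFinite {x : β | x < ⊤}).toFinset,
          (psiS K (φ ⁻¹' Set.Iic x) ⊥ (rho x)
              - psiS K (φ ⁻¹' Set.Iio x) ⊥ (rho x - 1) * la K)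
            * psiS K (Set.Ico x ⊤) x (n - rho x - 1) := by
    have herase : Finset.univ.erase (⊤ : β)
        = (Set.toFinite {x : β | x < ⊤}).toFinset := by
      ext x
      simp only [Finset.mem_erase, Finset.mem_univ, and_true, Set.Finite.mem_toFinset,
        Set.mem_setOf_eq, lt_top_iff_ne_top]
    rw [herase]
    refine Finset.sum_congr rfl (fun x hx => ?_)
    rw [Set.Finite.mem_toFinset] at hx
    rw [if_neg hx.ne]
  rw [hsum2, ← core K hgΓ hgB hφ]

end CDIndex
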